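/- Let (C, P) be a Dorroh pair of coalgebras over a field k and M a k-vector space. Then M carries a left C⋉_d P-comodule structure (a linear map ρ : M → (C⋉_d P)⊗M with (Δ⊗id)ρ = (id⊗ρ)ρ) if and only if M carries a left C-comodule structure ρ_l^C : M → C⊗M and a left P-comodule structure ρ_l^P : M → P⊗M satisfying (id⊗ρ_l^C)ρ_l^P = (ρ_r⊗id)ρ_l^P and (id⊗ρ_l^P)ρ_l^C = (ρ_l⊗id)ρ_l^P; the correspondence is ρ(m) = Σ (m₍₋₁₎,0)⊗m₍₀₎ + Σ (0,m₍₋₁₎')⊗m₍₀₎', where ρ_l^C(m) = Σ m₍₋₁₎⊗m₍₀₎ and ρ_l^P(m) = Σ m₍₋₁₎'⊗m₍₀₎'. -/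

import Mathlib

open TensorProduct

section

variable {k : Type} [Field k] {C P : Type}
  [AddCommGroup C] [Module k C] [AddCommGroup P] [Module k P]

/-- Coassociativity of a (not necessarily counital) comultiplication. -/
def Coassoc (Δ : C →ₗ[k] C ⊗[k] C) : Prop :=
  (TensorProduct.assoc k C C C).toLinearMap ∘ₗ Δ.rTensor C ∘ₗ Δ = Δ.lTensor C ∘ₗ Δ

/-- `(C, P)` together with the comultiplications `ΔC`, `ΔP` and the coactions
`ρl : P → C ⊗ P`, `ρr : P → P ⊗ C` is a Dorroh pair of coalgebras. -/
def IsDorrohPairC (ΔC : C →ₗ[k] C ⊗[k] C) (ΔP : P →ₗ[k] P ⊗[k] P)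
    (ρl : P →ₗ[k] C ⊗[k] P) (ρr : P →ₗ[k] P ⊗[k] C) : Prop :=
  Coassoc ΔC ∧ Coassoc ΔP ∧
  ((TensorProduct.assoc k C C P).toLinearMap ∘ₗ ΔC.rTensor P ∘ₗ ρl = ρl.lTensor C ∘ₗ ρl) ∧
  (ΔC.lTensor P ∘ₗ ρr = (TensorProduct.assoc k P C C).toLinearMap ∘ₗ ρr.rTensor C ∘ₗ ρr) ∧
  (ρr.lTensor C ∘ₗ ρl = (TensorProduct.assoc k C P C).toLinearMap ∘ₗ ρl.rTensor C ∘ₗ ρr) ∧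
  (ρr.lTensor P ∘ₗ ΔP = (TensorProduct.assoc k P P C).toLinearMap ∘ₗ ΔP.rTensor C ∘ₗ ρr) ∧
  ((TensorProduct.assoc k C P P).toLinearMap ∘ₗ ρl.rTensor P ∘ₗ ΔP = ΔP.lTensor C ∘ₗ ρl) ∧
  ((TensorProduct.assoc k P C P).toLinearMap ∘ₗ ρr.rTensor P ∘ₗ ΔP = ρl.lTensor P ∘ₗ ΔP)

/-- The comultiplication of the Dorroh extension `C ⋉_d P`,
`Δ(c,p) = Σ (c₁,0)⊗(c₂,0) + Σ (p₍₋₁₎,0)⊗(0,p₍₀₎) + Σ (0,p₍₀₎)⊗(p₍₁₎,0) + Σ (0,p₁)⊗(0,p₂)`. -/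
noncomputable def dorrohComul (ΔC : C →ₗ[k] C ⊗[k] C) (ΔP : P →ₗ[k] P ⊗[k] P)
    (ρl : P →ₗ[k] C ⊗[k] P) (ρr : P →ₗ[k] P ⊗[k] C) :
    (C × P) →ₗ[k] (C × P) ⊗[k] (C × P) :=
  TensorProduct.map (LinearMap.inl k C P) (LinearMap.inl k C P) ∘ₗ ΔC ∘ₗ LinearMap.fst k C P
  + TensorProduct.map (LinearMap.inl k C P) (LinearMap.inr k C P) ∘ₗ ρl ∘ₗ LinearMap.snd k C P
  + TensorProduct.map (LinearMap.inr k C P) (LinearMap.inl k C P) ∘ₗ ρr ∘ₗ LinearMap.snd k C P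
  + TensorProduct.map (LinearMap.inr k C P) (LinearMap.inr k C P) ∘ₗ ΔP ∘ₗ LinearMap.snd k C P


/-- `ρ` is a left comodule structure over the comultiplication `Δ`. -/
def IsLeftComodule {M : Type} [AddCommGroup M] [Module k M]
    (Δ : C →ₗ[k] C ⊗[k] C) (ρ : M →ₗ[k] C ⊗[k] M) : Prop :=
  (TensorProduct.assoc k C C M).toLinearMap ∘ₗ Δ.rTensor M ∘ₗ ρ = ρ.lTensor C ∘ₗ ρ


section Aux
variable {A B X Y W A₁ A₂ B₁ B₂ N T : Type}
  [AddCommGroup A] [Module k A] [AddCommGroup B] [Module k B]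
  [AddCommGroup X] [Module k X] [AddCommGroup Y] [Module k Y]
  [AddCommGroup W] [Module k W] [AddCommGroup T] [Module k T]
  [AddCommGroup A₁] [Module k A₁] [AddCommGroup A₂] [Module k A₂]
  [AddCommGroup B₁] [Module k B₁] [AddCommGroup B₂] [Module k B₂]
  [AddCommGroup N] [Module k N]

lemma assoc_map_apply (f : A₁ →ₗ[k] B₁) (g : A₂ →ₗ[k] B₂) (x : (A₁ ⊗[k] A₂) ⊗[k] N) :
    (TensorProduct.assoc k B₁ B₂ N).toLinearMap ((TensorProduct.map f g).rTensor N x)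
      = TensorProduct.map f (g.rTensor N) ((TensorProduct.assoc k A₁ A₂ N).toLinearMap x) :=
  (TensorProduct.map_map_assoc f g LinearMap.id x).symm

lemma lT_rT_apply (f : A →ₗ[k] B) (g : X →ₗ[k] Y) (x : A ⊗[k] X) :
    g.lTensor B (f.rTensor X x) = TensorProduct.map f g x := by
  rw [← LinearMap.comp_apply, LinearMap.lTensor_comp_rTensor]

lemma rT_lT_apply (f : A →ₗ[k] B) (g : X →ₗ[k] Y) (x : A ⊗[k] X) :
    f.rTensor Y (g.lTensor A x) = TensorProduct.map f g x := by
  rw [← LinearMap.comp_apply, LinearMap.rTensor_comp_lTensor]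

lemma map_comp_right_apply (f : A →ₗ[k] B) (g : X →ₗ[k] Y) (h : W →ₗ[k] X) (x : A ⊗[k] W) :
    TensorProduct.map f (g ∘ₗ h) x = TensorProduct.map f g (h.lTensor A x) := by
  have := TensorProduct.map_comp f g LinearMap.id h
  rw [LinearMap.comp_id] at this
  rw [this, LinearMap.comp_apply]
  rfl

lemma map_map_apply (f : A →ₗ[k] B) (g : X →ₗ[k] Y) (f' : W →ₗ[k] A) (g' : N →ₗ[k] X)
    (x : W ⊗[k] N) :
    TensorProduct.map f g (TensorProduct.map f' g' x)
      = TensorProduct.map (f ∘ₗ f') (g ∘ₗ g') x := by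
  rw [TensorProduct.map_comp, LinearMap.comp_apply]

/-- Projection of a comodule structure along a morphism of the comultiplication. -/
lemma comodule_project {M : Type} [AddCommGroup M] [Module k M]
    (Δ : A →ₗ[k] A ⊗[k] A) (ρ : M →ₗ[k] A ⊗[k] M) (hρ : IsLeftComodule Δ ρ)
    (f : A →ₗ[k] X) (g : A →ₗ[k] Y) (δ : T →ₗ[k] X ⊗[k] Y) (τ : A →ₗ[k] T)
    (hp : TensorProduct.map f g ∘ₗ Δ = δ ∘ₗ τ) :
    (TensorProduct.assoc k X Y M).toLinearMap ∘ₗ δ.rTensor M ∘ₗ (τ.rTensor M ∘ₗ ρ)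
      = (g.rTensor M ∘ₗ ρ).lTensor X ∘ₗ (f.rTensor M ∘ₗ ρ) := by
  apply LinearMap.ext; intro m
  have Hm := LinearMap.congr_fun hρ m
  simp only [LinearMap.comp_apply] at Hm ⊢
  calc (TensorProduct.assoc k X Y M).toLinearMap (δ.rTensor M (τ.rTensor M (ρ m)))
      = (TensorProduct.assoc k X Y M).toLinearMap ((δ ∘ₗ τ).rTensor M (ρ m)) := by
        rw [LinearMap.rTensor_comp_apply]
    _ = (TensorProduct.assoc k X Y M).toLinearMap
          ((TensorProduct.map f g ∘ₗ Δ).rTensor M (ρ m)) := by rw [hp]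
    _ = (TensorProduct.assoc k X Y M).toLinearMap
          ((TensorProduct.map f g).rTensor M (Δ.rTensor M (ρ m))) := by
        rw [LinearMap.rTensor_comp_apply]
    _ = TensorProduct.map f (g.rTensor M)
          ((TensorProduct.assoc k A A M).toLinearMap (Δ.rTensor M (ρ m))) :=
        assoc_map_apply f g _
    _ = TensorProduct.map f (g.rTensor M) (ρ.lTensor A (ρ m)) := by rw [Hm]
    _ = (g.rTensor M).lTensor X (f.rTensor (A ⊗[k] M) (ρ.lTensor A (ρ m))) :=
        (lT_rT_apply f (g.rTensor M) _).symm
    _ = (g.rTensor M).lTensor X (TensorProduct.map f ρ (ρ m)) := by rw [rT_lT_apply]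
    _ = (g.rTensor M).lTensor X (ρ.lTensor X (f.rTensor M (ρ m))) := by rw [lT_rT_apply]
    _ = (g.rTensor M ∘ₗ ρ).lTensor X (f.rTensor M (ρ m)) := by
        rw [LinearMap.lTensor_comp_apply]

end Aux

section Dorroh
variable (ΔC : C →ₗ[k] C ⊗[k] C) (ΔP : P →ₗ[k] P ⊗[k] P)
  (ρl : P →ₗ[k] C ⊗[k] P) (ρr : P →ₗ[k] P ⊗[k] C)

lemma dorroh_comp_inl :
    dorrohComul ΔC ΔP ρl ρr ∘ₗ LinearMap.inl k C P =
      TensorProduct.map (LinearMap.inl k C P) (LinearMap.inl k C P) ∘ₗ ΔC := by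
  apply LinearMap.ext; intro c
  simp [dorrohComul]

lemma dorroh_comp_inr :
    dorrohComul ΔC ΔP ρl ρr ∘ₗ LinearMap.inr k C P =
      TensorProduct.map (LinearMap.inl k C P) (LinearMap.inr k C P) ∘ₗ ρl
      + TensorProduct.map (LinearMap.inr k C P) (LinearMap.inl k C P) ∘ₗ ρr
      + TensorProduct.map (LinearMap.inr k C P) (LinearMap.inr k C P) ∘ₗ ΔP := by
  apply LinearMap.ext; intro p
  simp [dorrohComul]

lemma dorroh_proj_ll :
    TensorProduct.map (LinearMap.fst k C P) (LinearMap.fst k C P) ∘ₗ dorrohComul ΔC ΔP ρl ρr =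
      ΔC ∘ₗ LinearMap.fst k C P := by
  apply LinearMap.ext; intro x
  simp [dorrohComul, map_map_apply]

lemma dorroh_proj_lr :
    TensorProduct.map (LinearMap.fst k C P) (LinearMap.snd k C P) ∘ₗ dorrohComul ΔC ΔP ρl ρr =
      ρl ∘ₗ LinearMap.snd k C P := by
  apply LinearMap.ext; intro x
  simp [dorrohComul, map_map_apply]

lemma dorroh_proj_rl :
    TensorProduct.map (LinearMap.snd k C P) (LinearMap.fst k C P) ∘ₗ dorrohComul ΔC ΔP ρl ρr =
      ρr ∘ₗ LinearMap.snd k C P := by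
  apply LinearMap.ext; intro x
  simp [dorrohComul, map_map_apply]

lemma dorroh_proj_rr :
    TensorProduct.map (LinearMap.snd k C P) (LinearMap.snd k C P) ∘ₗ dorrohComul ΔC ΔP ρl ρr =
      ΔP ∘ₗ LinearMap.snd k C P := by
  apply LinearMap.ext; intro x
  simp [dorrohComul, map_map_apply]

lemma inl_fst_add_inr_snd :
    LinearMap.inl k C P ∘ₗ LinearMap.fst k C P + LinearMap.inr k C P ∘ₗ LinearMap.snd k C P
      = LinearMap.id := by
  apply LinearMap.ext; rintro ⟨c, p⟩
  simp

end Dorroh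

/-- **Proposition 2.12 (left comodules over `C ⋉_d P`).** A vector space `M` is a left
`C ⋉_d P`-comodule iff it is simultaneously a left `C`-comodule and a left `P`-comodule
satisfying `(id⊗ρ_l^C)ρ_l^P = (ρ_r⊗id)ρ_l^P` and `(id⊗ρ_l^P)ρ_l^C = (ρ_l⊗id)ρ_l^P`;
the correspondence is `ρ(m) = Σ (m₍₋₁₎,0)⊗m₍₀₎ + Σ (0,m₍₋₁₎')⊗m₍₀₎'`. -/
theorem dorroh_left_comodule {M : Type} [AddCommGroup M] [Module k M]
    (ΔC : C →ₗ[k] C ⊗[k] C) (ΔP : P →ₗ[k] P ⊗[k] P)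
    (ρl : P →ₗ[k] C ⊗[k] P) (ρr : P →ₗ[k] P ⊗[k] C)
    (h : IsDorrohPairC ΔC ΔP ρl ρr) :
    (∀ ρ : M →ₗ[k] (C × P) ⊗[k] M,
      IsLeftComodule (dorrohComul ΔC ΔP ρl ρr) ρ →
        IsLeftComodule ΔC ((LinearMap.fst k C P).rTensor M ∘ₗ ρ) ∧
        IsLeftComodule ΔP ((LinearMap.snd k C P).rTensor M ∘ₗ ρ) ∧
        (((LinearMap.fst k C P).rTensor M ∘ₗ ρ).lTensor P ∘ₗ
            ((LinearMap.snd k C P).rTensor M ∘ₗ ρ) =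
          (TensorProduct.assoc k P C M).toLinearMap ∘ₗ ρr.rTensor M ∘ₗ
            ((LinearMap.snd k C P).rTensor M ∘ₗ ρ)) ∧
        (((LinearMap.snd k C P).rTensor M ∘ₗ ρ).lTensor C ∘ₗ
            ((LinearMap.fst k C P).rTensor M ∘ₗ ρ) =
          (TensorProduct.assoc k C P M).toLinearMap ∘ₗ ρl.rTensor M ∘ₗ
            ((LinearMap.snd k C P).rTensor M ∘ₗ ρ)) ∧
        ρ = (LinearMap.inl k C P).rTensor M ∘ₗ ((LinearMap.fst k C P).rTensor M ∘ₗ ρ) +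
            (LinearMap.inr k C P).rTensor M ∘ₗ ((LinearMap.snd k C P).rTensor M ∘ₗ ρ)) ∧
    (∀ (ρC : M →ₗ[k] C ⊗[k] M) (ρP : M →ₗ[k] P ⊗[k] M),
      IsLeftComodule ΔC ρC →
      IsLeftComodule ΔP ρP →
      (ρC.lTensor P ∘ₗ ρP =
        (TensorProduct.assoc k P C M).toLinearMap ∘ₗ ρr.rTensor M ∘ₗ ρP) →
      (ρP.lTensor C ∘ₗ ρC =
        (TensorProduct.assoc k C P M).toLinearMap ∘ₗ ρl.rTensor M ∘ₗ ρP) →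
      IsLeftComodule (dorrohComul ΔC ΔP ρl ρr)
        ((LinearMap.inl k C P).rTensor M ∘ₗ ρC + (LinearMap.inr k C P).rTensor M ∘ₗ ρP)) := by
  constructor
  · intro ρ hρ
    refine ⟨?_, ?_, ?_, ?_, ?_⟩
    · exact comodule_project _ ρ hρ _ _ ΔC (LinearMap.fst k C P) (dorroh_proj_ll ΔC ΔP ρl ρr)
    · exact comodule_project _ ρ hρ _ _ ΔP (LinearMap.snd k C P) (dorroh_proj_rr ΔC ΔP ρl ρr)
    · exact (comodule_project _ ρ hρ _ _ ρr (LinearMap.snd k C P)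
        (dorroh_proj_rl ΔC ΔP ρl ρr)).symm
    · exact (comodule_project _ ρ hρ _ _ ρl (LinearMap.snd k C P)
        (dorroh_proj_lr ΔC ΔP ρl ρr)).symm
    · have hid : (LinearMap.inl k C P).rTensor M ∘ₗ (LinearMap.fst k C P).rTensor M
          + (LinearMap.inr k C P).rTensor M ∘ₗ (LinearMap.snd k C P).rTensor M
          = LinearMap.id := by
        rw [← LinearMap.rTensor_comp, ← LinearMap.rTensor_comp, ← LinearMap.rTensor_add,
          inl_fst_add_inr_snd, LinearMap.rTensor_id]
      conv_rhs => rw [← LinearMap.comp_assoc, ← LinearMap.comp_assoc, ← LinearMap.add_comp,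
        hid, LinearMap.id_comp]
  · intro ρC ρP hC hP h3 h4
    set ι₁ := LinearMap.inl k C P with hι₁
    set ι₂ := LinearMap.inr k C P with hι₂
    set ρ := ι₁.rTensor M ∘ₗ ρC + ι₂.rTensor M ∘ₗ ρP with hρdef
    apply LinearMap.ext; intro m
    have hCm := LinearMap.congr_fun hC m
    have hPm := LinearMap.congr_fun hP m
    have h3m := LinearMap.congr_fun h3 m
    have h4m := LinearMap.congr_fun h4 m
    simp only [LinearMap.comp_apply] at hCm hPm h3m h4m ⊢
    have hρm : ρ m = ι₁.rTensor M (ρC m) + ι₂.rTensor M (ρP m) := by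
      simp [hρdef]
    have L1 : (TensorProduct.assoc k (C × P) (C × P) M).toLinearMap
        ((dorrohComul ΔC ΔP ρl ρr).rTensor M (ι₁.rTensor M (ρC m)))
        = TensorProduct.map ι₁ (ι₁.rTensor M) (ρC.lTensor C (ρC m)) := by
      rw [← LinearMap.rTensor_comp_apply, dorroh_comp_inl ΔC ΔP ρl ρr,
        LinearMap.rTensor_comp_apply, assoc_map_apply, hCm]
    have L2 : (TensorProduct.assoc k (C × P) (C × P) M).toLinearMap
        ((dorrohComul ΔC ΔP ρl ρr).rTensor M (ι₂.rTensor M (ρP m)))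
        = TensorProduct.map ι₁ (ι₂.rTensor M) (ρP.lTensor C (ρC m))
          + TensorProduct.map ι₂ (ι₁.rTensor M) (ρC.lTensor P (ρP m))
          + TensorProduct.map ι₂ (ι₂.rTensor M) (ρP.lTensor P (ρP m)) := by
      rw [← LinearMap.rTensor_comp_apply, dorroh_comp_inr ΔC ΔP ρl ρr,
        LinearMap.rTensor_add, LinearMap.rTensor_add, LinearMap.add_apply,
        LinearMap.add_apply, map_add, map_add,
        LinearMap.rTensor_comp_apply, LinearMap.rTensor_comp_apply,
        LinearMap.rTensor_comp_apply, assoc_map_apply, assoc_map_apply, assoc_map_apply,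
        ← h4m, ← h3m, hPm]
    have R1 : ρ.lTensor (C × P) (ι₁.rTensor M (ρC m))
        = TensorProduct.map ι₁ (ι₁.rTensor M) (ρC.lTensor C (ρC m))
          + TensorProduct.map ι₁ (ι₂.rTensor M) (ρP.lTensor C (ρC m)) := by
      rw [lT_rT_apply, hρdef, TensorProduct.map_add_right, LinearMap.add_apply,
        map_comp_right_apply, map_comp_right_apply]
    have R2 : ρ.lTensor (C × P) (ι₂.rTensor M (ρP m))
        = TensorProduct.map ι₂ (ι₁.rTensor M) (ρC.lTensor P (ρP m))
          + TensorProduct.map ι₂ (ι₂.rTensor M) (ρP.lTensor P (ρP m)) := by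
      rw [lT_rT_apply, hρdef, TensorProduct.map_add_right, LinearMap.add_apply,
        map_comp_right_apply, map_comp_right_apply]
    rw [hρm, map_add, map_add, map_add, L1, L2, R1, R2]
    abel

end
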